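/- Let G be an orientable prismatic graph. Then every connected component of the derived graph D(G) is either claw-free (contains no induced subgraph isomorphic to K_{1,3}) or isomorphic to the complete bipartite graph K_{3,3}. -/

import Mathlib

/-- A graph is prismatic if for every triangle, every vertex not in the triangle
has exactly one neighbour in the triangle. -/
def Prismatic {V : Type*} (G : SimpleGraph V) : Prop :=
  ∀ a b c v : V, G.Adj a b → G.Adj a c → G.Adj b c →
    v ≠ a → v ≠ b → v ≠ c → ∃! u, u ∈ ({a, b, c} : Set V) ∧ G.Adj v u

/-- A prismatic graph is orientable if one can choose a cyclic permutation of every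
triangle, compatibly on every pair of vertex-disjoint triangles joined by a perfect
matching. -/
def Orientable {V : Type*} [DecidableEq V] (G : SimpleGraph V) : Prop :=
  ∃ O : Finset V → V → V,
    (∀ a b c : V, G.Adj a b → G.Adj a c → G.Adj b c →
      O {a, b, c} a ∈ ({a, b, c} : Finset V) ∧ O {a, b, c} a ≠ a ∧
        O {a, b, c} (O {a, b, c} a) ≠ a) ∧
    (∀ s₁ s₂ s₃ t₁ t₂ t₃ : V,
      G.Adj s₁ s₂ → G.Adj s₁ s₃ → G.Adj s₂ s₃ →
      G.Adj t₁ t₂ → G.Adj t₁ t₃ → G.Adj t₂ t₃ →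
      Disjoint ({s₁, s₂, s₃} : Finset V) ({t₁, t₂, t₃} : Finset V) →
      G.Adj s₁ t₁ → G.Adj s₂ t₂ → G.Adj s₃ t₃ →
      (O {s₁, s₂, s₃} s₁ = s₂ ↔ O {t₁, t₂, t₃} t₁ = t₂))

/-- The claw K_{1,3}: vertex 0 is adjacent to vertices 1, 2, 3. -/
def Claw : SimpleGraph (Fin 4) where
  Adj u v := (u = 0 ∧ v ≠ 0) ∨ (v = 0 ∧ u ≠ 0)
  symm := by tauto
  loopless := ⟨by rintro u (⟨h1, h2⟩ | ⟨h1, h2⟩) <;> exact h2 h1⟩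

/-- The derived graph of G: the intersection graph of the triangles of G. -/
def DerivedGraph {V : Type*} [DecidableEq V] (G : SimpleGraph V) :
    SimpleGraph {T : Finset V // G.IsNClique 3 T} where
  Adj T T' := T ≠ T' ∧ (T.1 ∩ T'.1).Nonempty
  symm := ⟨by
    rintro T T' ⟨h1, h2⟩
    exact ⟨h1.symm, by rwa [Finset.inter_comm]⟩⟩
  loopless := ⟨fun T h => h.1 rfl⟩

set_option linter.unusedSectionVars false

section Helpers
variable {V : Type*} [DecidableEq V] {G : SimpleGraph V}

lemma uniq (hG : Prismatic G) {t1 t2 t3 v : V} (h12 : G.Adj t1 t2) (h13 : G.Adj t1 t3)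
    (h23 : G.Adj t2 t3) (hv1 : v ≠ t1) (hv2 : v ≠ t2) (hv3 : v ≠ t3)
    (ha : G.Adj v t1) : ¬ G.Adj v t2 := by
  obtain ⟨u, -, hu⟩ := hG t1 t2 t3 v h12 h13 h23 hv1 hv2 hv3
  intro h
  have e1 := hu t1 ⟨by simp, ha⟩
  have e2 := hu t2 ⟨by simp, h⟩
  exact h12.ne (e1.trans e2.symm)

lemma exi (hG : Prismatic G) {t1 t2 t3 v : V} (h12 : G.Adj t1 t2) (h13 : G.Adj t1 t3)
    (h23 : G.Adj t2 t3) (hv1 : v ≠ t1) (hv2 : v ≠ t2) (hv3 : v ≠ t3) :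
    G.Adj v t1 ∨ G.Adj v t2 ∨ G.Adj v t3 := by
  obtain ⟨u, ⟨hm, hadj⟩, -⟩ := hG t1 t2 t3 v h12 h13 h23 hv1 hv2 hv3
  simp only [Set.mem_insert_iff, Set.mem_singleton_iff] at hm
  rcases hm with rfl | rfl | rfl
  · exact Or.inl hadj
  · exact Or.inr (Or.inl hadj)
  · exact Or.inr (Or.inr hadj)

lemma third (hG : Prismatic G) {t1 t2 t3 r : V} (h12 : G.Adj t1 t2) (h13 : G.Adj t1 t3)
    (h23 : G.Adj t2 t3) (hr1 : G.Adj r t1) (hr2 : G.Adj r t2) : r = t3 := by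
  by_contra h
  exact uniq hG h12 h13 h23 hr1.ne hr2.ne h hr1 hr2

lemma tri_with {s : Finset V} (h : G.IsNClique 3 s) {m : V} (hm : m ∈ s) :
    ∃ x y, m ≠ x ∧ m ≠ y ∧ x ≠ y ∧ G.Adj m x ∧ G.Adj m y ∧ G.Adj x y ∧ s = {m, x, y} := by
  obtain ⟨a, b, c, hab, hac, hbc, rfl⟩ := Finset.card_eq_three.mp h.2
  have hcl := h.1
  have Aab : G.Adj a b := hcl (by simp) (by simp) hab
  have Aac : G.Adj a c := hcl (by simp) (by simp) hac
  have Abc : G.Adj b c := hcl (by simp) (by simp) hbc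
  simp only [Finset.mem_insert, Finset.mem_singleton] at hm
  rcases hm with rfl | rfl | rfl
  · exact ⟨b, c, hab, hac, hbc, Aab, Aac, Abc, rfl⟩
  · exact ⟨a, c, hab.symm, hbc, hac, Aab.symm, Abc, Aac, by ext z; simp; tauto⟩
  · exact ⟨a, b, hac.symm, hbc.symm, hab, Aac.symm, Abc.symm, Aab, by ext z; simp; tauto⟩

lemma disj3 {a1 a2 a3 b1 b2 b3 : V} (h11 : a1 ≠ b1) (h12 : a1 ≠ b2) (h13 : a1 ≠ b3)
    (h21 : a2 ≠ b1) (h22 : a2 ≠ b2) (h23 : a2 ≠ b3)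
    (h31 : a3 ≠ b1) (h32 : a3 ≠ b2) (h33 : a3 ≠ b3) :
    Disjoint ({a1, a2, a3} : Finset V) ({b1, b2, b3} : Finset V) := by
  rw [Finset.disjoint_left]
  intro x hx hy
  simp only [Finset.mem_insert, Finset.mem_singleton] at hx hy
  rcases hx with rfl | rfl | rfl <;> rcases hy with h | h | h <;> simp_all

lemma parity (hor : Orientable G) {a1 a2 a3 b1 b2 b3 c1 c2 c3 : V}
    (ha12 : G.Adj a1 a2) (ha13 : G.Adj a1 a3) (ha23 : G.Adj a2 a3)
    (hb12 : G.Adj b1 b2) (hb13 : G.Adj b1 b3) (hb23 : G.Adj b2 b3)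
    (hc12 : G.Adj c1 c2) (hc13 : G.Adj c1 c3) (hc23 : G.Adj c2 c3)
    (dAB : Disjoint ({a1, a2, a3} : Finset V) ({b1, b2, b3} : Finset V))
    (dAC : Disjoint ({a1, a2, a3} : Finset V) ({c1, c2, c3} : Finset V))
    (dBC : Disjoint ({b1, b2, b3} : Finset V) ({c1, c2, c3} : Finset V))
    (m1 : G.Adj a1 b1) (m2 : G.Adj a2 b2) (m3 : G.Adj a3 b3)
    (n1 : G.Adj a1 c1) (n2 : G.Adj a2 c2) (n3 : G.Adj a3 c3)
    (p1 : G.Adj b1 c1) (p2 : G.Adj b2 c3) (p3 : G.Adj b3 c2) : False := by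
  obtain ⟨O, hO1, hO2⟩ := hor
  have h1 := hO2 a1 a2 a3 b1 b2 b3 ha12 ha13 ha23 hb12 hb13 hb23 dAB m1 m2 m3
  have h2 := hO2 a1 a2 a3 c1 c2 c3 ha12 ha13 ha23 hc12 hc13 hc23 dAC n1 n2 n3
  have hset : ({c1, c3, c2} : Finset V) = {c1, c2, c3} := by ext z; simp; tauto
  have h3 := hO2 b1 b2 b3 c1 c3 c2 hb12 hb13 hb23 hc13 hc12 hc23.symm
    (by rw [hset]; exact dBC) p1 p2 p3
  rw [hset] at h3
  have h4 := hO1 c1 c2 c3 hc12 hc13 hc23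
  have h5 : O {c1, c2, c3} c1 = c2 ∨ O {c1, c2, c3} c1 = c3 := by
    have hm := h4.1
    simp only [Finset.mem_insert, Finset.mem_singleton] at hm
    rcases hm with h | h | h
    · exact absurd h h4.2.1
    · exact Or.inl h
    · exact Or.inr h
  have h6 : ¬(O {c1, c2, c3} c1 = c2 ∧ O {c1, c2, c3} c1 = c3) :=
    fun ⟨u, v⟩ => hc23.ne (u.symm.trans v)
  tauto
end Helpers

section GridDef
variable {V : Type*} [DecidableEq V]

def IsGrid (G : SimpleGraph V) (g : Fin 3 → Fin 3 → V) : Prop :=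
  (∀ i j i' j', g i j = g i' j' → i = i' ∧ j = j') ∧
  ∀ i j i' j', G.Adj (g i j) (g i' j') ↔ g i j ≠ g i' j' ∧ (i = i' ∨ j = j')

variable {G : SimpleGraph V} {g : Fin 3 → Fin 3 → V}

lemma IsGrid.ne (hg : IsGrid G g) {i j i' j' : Fin 3} (h : ¬(i = i' ∧ j = j')) :
    g i j ≠ g i' j' := fun he => h (hg.1 i j i' j' he)

lemma IsGrid.adjr (hg : IsGrid G g) (i : Fin 3) {j j' : Fin 3} (hjj : j ≠ j') :
    G.Adj (g i j) (g i j') :=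
  (hg.2 i j i j').mpr ⟨hg.ne (fun hh => hjj hh.2), Or.inl rfl⟩

lemma IsGrid.adjc (hg : IsGrid G g) {i i' : Fin 3} (j : Fin 3) (hii : i ≠ i') :
    G.Adj (g i j) (g i' j) :=
  (hg.2 i j i' j).mpr ⟨hg.ne (fun hh => hii hh.1), Or.inr rfl⟩

lemma IsGrid.nadj (hg : IsGrid G g) {i j i' j' : Fin 3} (hii : i ≠ i') (hjj : j ≠ j') :
    ¬ G.Adj (g i j) (g i' j') := by
  intro h
  rcases ((hg.2 i j i' j').mp h).2 with h' | h'
  · exact hii h'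
  · exact hjj h'

lemma IsGrid.perm (hg : IsGrid G g) (σ τ : Equiv.Perm (Fin 3)) :
    IsGrid G (fun i j => g (σ i) (τ j)) := by
  constructor
  · intro i j i' j' h
    have := hg.1 _ _ _ _ h
    exact ⟨σ.injective this.1, τ.injective this.2⟩
  · intro i j i' j'
    rw [hg.2]
    simp [Equiv.apply_eq_iff_eq]

def gRow (g : Fin 3 → Fin 3 → V) (i : Fin 3) : Finset V := {g i 0, g i 1, g i 2}
def gCol (g : Fin 3 → Fin 3 → V) (j : Fin 3) : Finset V := {g 0 j, g 1 j, g 2 j}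

lemma mem_gRow {v : V} {i : Fin 3} : v ∈ gRow g i ↔ ∃ j, v = g i j := by
  simp only [gRow, Finset.mem_insert, Finset.mem_singleton]
  constructor
  · rintro (rfl | rfl | rfl)
    exacts [⟨0, rfl⟩, ⟨1, rfl⟩, ⟨2, rfl⟩]
  · rintro ⟨j, rfl⟩
    fin_cases j <;> simp

lemma mem_gCol {v : V} {j : Fin 3} : v ∈ gCol g j ↔ ∃ i, v = g i j := by
  simp only [gCol, Finset.mem_insert, Finset.mem_singleton]
  constructor
  · rintro (rfl | rfl | rfl)
    exacts [⟨0, rfl⟩, ⟨1, rfl⟩, ⟨2, rfl⟩]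
  · rintro ⟨i, rfl⟩
    fin_cases i <;> simp

lemma gRow_clique (hg : IsGrid G g) (i : Fin 3) : G.IsNClique 3 (gRow g i) := by
  constructor
  · intro u hu v hv huv
    rw [Finset.mem_coe, mem_gRow] at hu hv
    obtain ⟨j, rfl⟩ := hu
    obtain ⟨j', rfl⟩ := hv
    exact hg.adjr i (fun h => huv (by rw [h]))
  · apply Finset.card_eq_three.mpr
    exact ⟨_, _, _, hg.ne (by simp), hg.ne (by simp), hg.ne (by simp), rfl⟩

lemma gCol_clique (hg : IsGrid G g) (j : Fin 3) : G.IsNClique 3 (gCol g j) := by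
  constructor
  · intro u hu v hv huv
    rw [Finset.mem_coe, mem_gCol] at hu hv
    obtain ⟨i, rfl⟩ := hu
    obtain ⟨i', rfl⟩ := hv
    exact hg.adjc j (fun h => huv (by rw [h]))
  · apply Finset.card_eq_three.mpr
    exact ⟨_, _, _, hg.ne (by simp), hg.ne (by simp), hg.ne (by simp), rfl⟩

lemma row_perm3 (f : Fin 3 → V) (τ : Equiv.Perm (Fin 3)) :
    ({f (τ 0), f (τ 1), f (τ 2)} : Finset V) = {f 0, f 1, f 2} := by
  have h1 : ∀ k : Fin 3, f k ∈ ({f 0, f 1, f 2} : Finset V) := by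
    intro k; fin_cases k <;> simp
  have h2 : ∀ k : Fin 3, f k ∈ ({f (τ 0), f (τ 1), f (τ 2)} : Finset V) := by
    intro k
    obtain ⟨l, hl⟩ : ∃ l, k = τ l := ⟨τ.symm k, (τ.apply_symm_apply k).symm⟩
    rw [hl]
    fin_cases l <;> simp
  apply Finset.Subset.antisymm
  · intro z hz
    simp only [Finset.mem_insert, Finset.mem_singleton] at hz
    rcases hz with rfl | rfl | rfl <;> exact h1 _
  · intro z hz
    simp only [Finset.mem_insert, Finset.mem_singleton] at hz
    rcases hz with rfl | rfl | rfl <;> exact h2 _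
end GridDef

section Grid00
variable {V : Type*} [DecidableEq V] {G : SimpleGraph V} {g : Fin 3 → Fin 3 → V}

lemma grid_pattern (hG : Prismatic G) (hg : IsGrid G g) {q : V}
    (hq : G.Adj (g 0 0) q) (hqm : ∀ i j, q ≠ g i j) :
    (G.Adj q (g 1 1) ∧ G.Adj q (g 2 2) ∧ ¬G.Adj q (g 1 2) ∧ ¬G.Adj q (g 2 1)) ∨
    (G.Adj q (g 1 2) ∧ G.Adj q (g 2 1) ∧ ¬G.Adj q (g 1 1) ∧ ¬G.Adj q (g 2 2)) := by
  have nq01 : ¬ G.Adj q (g 0 1) :=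
    uniq hG (hg.adjr 0 (by decide)) (hg.adjr 0 (by decide)) (hg.adjr 0 (by decide))
      (hqm 0 0) (hqm 0 1) (hqm 0 2) hq.symm
  have nq02 : ¬ G.Adj q (g 0 2) :=
    uniq hG (hg.adjr 0 (by decide)) (hg.adjr 0 (by decide)) (hg.adjr 0 (by decide))
      (hqm 0 0) (hqm 0 2) (hqm 0 1) hq.symm
  have nq10 : ¬ G.Adj q (g 1 0) :=
    uniq hG (hg.adjc 0 (by decide)) (hg.adjc 0 (by decide)) (hg.adjc 0 (by decide))
      (hqm 0 0) (hqm 1 0) (hqm 2 0) hq.symm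
  have nq20 : ¬ G.Adj q (g 2 0) :=
    uniq hG (hg.adjc 0 (by decide)) (hg.adjc 0 (by decide)) (hg.adjc 0 (by decide))
      (hqm 0 0) (hqm 2 0) (hqm 1 0) hq.symm
  have e1 : G.Adj q (g 1 1) ∨ G.Adj q (g 2 1) := by
    have := exi hG (hg.adjc 1 (show (0:Fin 3) ≠ 1 by decide)) (hg.adjc 1 (by decide))
      (hg.adjc 1 (by decide)) (hqm 0 1) (hqm 1 1) (hqm 2 1)
    tauto
  have b1 : ¬(G.Adj q (g 1 1) ∧ G.Adj q (g 2 1)) := fun ⟨u, v⟩ =>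
    uniq hG (hg.adjc 1 (show (1:Fin 3) ≠ 2 by decide)) (hg.adjc 1 (by decide))
      (hg.adjc 1 (by decide)) (hqm 1 1) (hqm 2 1) (hqm 0 1) u v
  have e2 : G.Adj q (g 1 2) ∨ G.Adj q (g 2 2) := by
    have := exi hG (hg.adjc 2 (show (0:Fin 3) ≠ 1 by decide)) (hg.adjc 2 (by decide))
      (hg.adjc 2 (by decide)) (hqm 0 2) (hqm 1 2) (hqm 2 2)
    tauto
  have b2 : ¬(G.Adj q (g 1 2) ∧ G.Adj q (g 2 2)) := fun ⟨u, v⟩ =>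
    uniq hG (hg.adjc 2 (show (1:Fin 3) ≠ 2 by decide)) (hg.adjc 2 (by decide))
      (hg.adjc 2 (by decide)) (hqm 1 2) (hqm 2 2) (hqm 0 2) u v
  have e3 : G.Adj q (g 1 1) ∨ G.Adj q (g 1 2) := by
    have := exi hG (hg.adjr 1 (show (0:Fin 3) ≠ 1 by decide)) (hg.adjr 1 (by decide))
      (hg.adjr 1 (by decide)) (hqm 1 0) (hqm 1 1) (hqm 1 2)
    tauto
  have b3 : ¬(G.Adj q (g 1 1) ∧ G.Adj q (g 1 2)) := fun ⟨u, v⟩ =>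
    uniq hG (hg.adjr 1 (show (1:Fin 3) ≠ 2 by decide)) (hg.adjr 1 (by decide))
      (hg.adjr 1 (by decide)) (hqm 1 1) (hqm 1 2) (hqm 1 0) u v
  have e4 : G.Adj q (g 2 1) ∨ G.Adj q (g 2 2) := by
    have := exi hG (hg.adjr 2 (show (0:Fin 3) ≠ 1 by decide)) (hg.adjr 2 (by decide))
      (hg.adjr 2 (by decide)) (hqm 2 0) (hqm 2 1) (hqm 2 2)
    tauto
  have b4 : ¬(G.Adj q (g 2 1) ∧ G.Adj q (g 2 2)) := fun ⟨u, v⟩ =>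
    uniq hG (hg.adjr 2 (show (1:Fin 3) ≠ 2 by decide)) (hg.adjr 2 (by decide))
      (hg.adjr 2 (by decide)) (hqm 2 1) (hqm 2 2) (hqm 2 0) u v
  tauto

lemma grid00 (hG : Prismatic G) (hor : Orientable G) (hg : IsGrid G g) {q r : V}
    (hq : G.Adj (g 0 0) q) (hr : G.Adj (g 0 0) r) (hqr : G.Adj q r) :
    ({g 0 0, q, r} : Finset V) = gRow g 0 ∨ ({g 0 0, q, r} : Finset V) = gCol g 0 := by
  by_cases hqm : ∃ i j, q = g i j
  · obtain ⟨i, j, rfl⟩ := hqm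
    have hij := (hg.2 0 0 i j).mp hq
    rcases hij.2 with h | h
    · subst h
      fin_cases j
      · exact absurd rfl hij.1
      · have hr3 : r = g 0 2 := third hG (hg.adjr 0 (show (0:Fin 3) ≠ 1 by decide))
          (hg.adjr 0 (by decide)) (hg.adjr 0 (by decide)) hr.symm hqr.symm
        subst hr3; left; rfl
      · have hr3 : r = g 0 1 := third hG (hg.adjr 0 (show (0:Fin 3) ≠ 2 by decide))
          (hg.adjr 0 (by decide)) (hg.adjr 0 (by decide)) hr.symm hqr.symm
        subst hr3; left; ext z; simp [gRow]; tauto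
    · subst h
      fin_cases i
      · exact absurd rfl hij.1
      · have hr3 : r = g 2 0 := third hG (hg.adjc 0 (show (0:Fin 3) ≠ 1 by decide))
          (hg.adjc 0 (by decide)) (hg.adjc 0 (by decide)) hr.symm hqr.symm
        subst hr3; right; rfl
      · have hr3 : r = g 1 0 := third hG (hg.adjc 0 (show (0:Fin 3) ≠ 2 by decide))
          (hg.adjc 0 (by decide)) (hg.adjc 0 (by decide)) hr.symm hqr.symm
        subst hr3; right; ext z; simp [gCol]; tauto
  · by_cases hrm : ∃ i j, r = g i j
    · exfalso
      obtain ⟨i, j, rfl⟩ := hrm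
      have hij := (hg.2 0 0 i j).mp hr
      rcases hij.2 with h | h
      · subst h
        fin_cases j
        · exact absurd rfl hij.1
        · exact hqm ⟨0, 2, third hG (hg.adjr 0 (show (0:Fin 3) ≠ 1 by decide))
            (hg.adjr 0 (by decide)) (hg.adjr 0 (by decide)) hq.symm hqr⟩
        · exact hqm ⟨0, 1, third hG (hg.adjr 0 (show (0:Fin 3) ≠ 2 by decide))
            (hg.adjr 0 (by decide)) (hg.adjr 0 (by decide)) hq.symm hqr⟩
      · subst h
        fin_cases i
        · exact absurd rfl hij.1
        · exact hqm ⟨2, 0, third hG (hg.adjc 0 (show (0:Fin 3) ≠ 1 by decide))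
            (hg.adjc 0 (by decide)) (hg.adjc 0 (by decide)) hq.symm hqr⟩
        · exact hqm ⟨1, 0, third hG (hg.adjc 0 (show (0:Fin 3) ≠ 2 by decide))
            (hg.adjc 0 (by decide)) (hg.adjc 0 (by decide)) hq.symm hqr⟩
    · exfalso
      push_neg at hqm hrm
      have pq := grid_pattern hG hg hq hqm
      have pr := grid_pattern hG hg hr hrm
      have nc11 : ¬(G.Adj q (g 1 1) ∧ G.Adj r (g 1 1)) := fun ⟨u, v⟩ =>
        uniq hG hqr hq.symm hr.symm (hqm 1 1).symm (hrm 1 1).symm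
          (hg.ne (by decide)) u.symm v.symm
      have nc12 : ¬(G.Adj q (g 1 2) ∧ G.Adj r (g 1 2)) := fun ⟨u, v⟩ =>
        uniq hG hqr hq.symm hr.symm (hqm 1 2).symm (hrm 1 2).symm
          (hg.ne (by decide)) u.symm v.symm
      have dAB : Disjoint ({g 0 1, g 1 1, g 2 1} : Finset V) ({g 0 2, g 1 2, g 2 2} : Finset V) :=
        disj3 (hg.ne (by decide)) (hg.ne (by decide)) (hg.ne (by decide)) (hg.ne (by decide))
          (hg.ne (by decide)) (hg.ne (by decide)) (hg.ne (by decide)) (hg.ne (by decide))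
          (hg.ne (by decide))
      have dACq : Disjoint ({g 0 1, g 1 1, g 2 1} : Finset V) ({g 0 0, q, r} : Finset V) :=
        disj3 (hg.ne (by decide)) (hqm 0 1).symm (hrm 0 1).symm
          (hg.ne (by decide)) (hqm 1 1).symm (hrm 1 1).symm
          (hg.ne (by decide)) (hqm 2 1).symm (hrm 2 1).symm
      have dBCq : Disjoint ({g 0 2, g 1 2, g 2 2} : Finset V) ({g 0 0, q, r} : Finset V) :=
        disj3 (hg.ne (by decide)) (hqm 0 2).symm (hrm 0 2).symm
          (hg.ne (by decide)) (hqm 1 2).symm (hrm 1 2).symm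
          (hg.ne (by decide)) (hqm 2 2).symm (hrm 2 2).symm
      have dACr : Disjoint ({g 0 1, g 1 1, g 2 1} : Finset V) ({g 0 0, r, q} : Finset V) :=
        disj3 (hg.ne (by decide)) (hrm 0 1).symm (hqm 0 1).symm
          (hg.ne (by decide)) (hrm 1 1).symm (hqm 1 1).symm
          (hg.ne (by decide)) (hrm 2 1).symm (hqm 2 1).symm
      have dBCr : Disjoint ({g 0 2, g 1 2, g 2 2} : Finset V) ({g 0 0, r, q} : Finset V) :=
        disj3 (hg.ne (by decide)) (hrm 0 2).symm (hqm 0 2).symm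
          (hg.ne (by decide)) (hrm 1 2).symm (hqm 1 2).symm
          (hg.ne (by decide)) (hrm 2 2).symm (hqm 2 2).symm
      have cA1 : G.Adj (g 0 1) (g 1 1) := hg.adjc 1 (by decide)
      have cA2 : G.Adj (g 0 1) (g 2 1) := hg.adjc 1 (by decide)
      have cA3 : G.Adj (g 1 1) (g 2 1) := hg.adjc 1 (by decide)
      have cB1 : G.Adj (g 0 2) (g 1 2) := hg.adjc 2 (by decide)
      have cB2 : G.Adj (g 0 2) (g 2 2) := hg.adjc 2 (by decide)
      have cB3 : G.Adj (g 1 2) (g 2 2) := hg.adjc 2 (by decide)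
      have mm1 : G.Adj (g 0 1) (g 0 2) := hg.adjr 0 (by decide)
      have mm2 : G.Adj (g 1 1) (g 1 2) := hg.adjr 1 (by decide)
      have mm3 : G.Adj (g 2 1) (g 2 2) := hg.adjr 2 (by decide)
      have nn1 : G.Adj (g 0 1) (g 0 0) := hg.adjr 0 (by decide)
      have pp1 : G.Adj (g 0 2) (g 0 0) := hg.adjr 0 (by decide)
      rcases pq with ⟨qa, qd, qnb, qnc⟩ | ⟨qb, qc, qna, qnd⟩ <;>
        rcases pr with ⟨ra, rd, rnb, rnc⟩ | ⟨rb, rc, rna, rnd⟩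
      · exact nc11 ⟨qa, ra⟩
      · exact parity hor cA1 cA2 cA3 cB1 cB2 cB3 hq hr hqr dAB dACq dBCq
          mm1 mm2 mm3 nn1 qa.symm rc.symm pp1 rb.symm qd.symm
      · exact parity hor cA1 cA2 cA3 cB1 cB2 cB3 hr hq hqr.symm dAB dACr dBCr
          mm1 mm2 mm3 nn1 ra.symm qc.symm pp1 qb.symm rd.symm
      · exact nc12 ⟨qb, rb⟩
end Grid00

section Closure
variable {V : Type*} [DecidableEq V] {G : SimpleGraph V} {g : Fin 3 → Fin 3 → V}

lemma grid_closure (hG : Prismatic G) (hor : Orientable G) (hg : IsGrid G g)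
    {s : Finset V} (hs : G.IsNClique 3 s) {i j : Fin 3} (hmem : g i j ∈ s) :
    s = gRow g i ∨ s = gCol g j := by
  obtain ⟨x, y, h1, h2, h3, hmx, hmy, hxy, rfl⟩ := tri_with hs hmem
  set σ : Equiv.Perm (Fin 3) := Equiv.swap 0 i with hσ
  set τ : Equiv.Perm (Fin 3) := Equiv.swap 0 j with hτ
  have hg' : IsGrid G (fun a b => g (σ a) (τ b)) := hg.perm σ τ
  have h00 : g (σ 0) (τ 0) = g i j := by
    rw [hσ, hτ, Equiv.swap_apply_left, Equiv.swap_apply_left]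
  have key := grid00 hG hor hg' (q := x) (r := y)
    (by show G.Adj (g (σ 0) (τ 0)) x; rw [h00]; exact hmx)
    (by show G.Adj (g (σ 0) (τ 0)) y; rw [h00]; exact hmy) hxy
  have hrow : gRow (fun a b => g (σ a) (τ b)) 0 = gRow g i := by
    show ({g (σ 0) (τ 0), g (σ 0) (τ 1), g (σ 0) (τ 2)} : Finset V) = gRow g i
    rw [hσ, Equiv.swap_apply_left]
    exact row_perm3 (g i) τ
  have hcol : gCol (fun a b => g (σ a) (τ b)) 0 = gCol g j := by
    show ({g (σ 0) (τ 0), g (σ 1) (τ 0), g (σ 2) (τ 0)} : Finset V) = gCol g j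
    rw [hτ, Equiv.swap_apply_left]
    exact row_perm3 (fun a => g a j) σ
  rw [hrow, hcol] at key
  have hset : ({g (σ 0) (τ 0), x, y} : Finset V) = {g i j, x, y} := by rw [h00]
  rw [hset] at key
  exact key
end Closure

section MkGrid
variable {V : Type*} [DecidableEq V] {G : SimpleGraph V}

set_option maxHeartbeats 2000000 in
lemma mk_grid {m1 x1 y1 m2 x2 y2 m3 x3 y3 : V}
    (d1 : m1 ≠ x1) (d2 : m1 ≠ y1) (d3 : x1 ≠ y1)
    (d4 : m2 ≠ x2) (d5 : m2 ≠ y2) (d6 : x2 ≠ y2)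
    (d7 : m3 ≠ x3) (d8 : m3 ≠ y3) (d9 : x3 ≠ y3)
    (e1 : m1 ≠ m2) (e2 : m1 ≠ x2) (e3 : m1 ≠ y2)
    (e4 : x1 ≠ m2) (e5 : x1 ≠ x2) (e6 : x1 ≠ y2)
    (e7 : y1 ≠ m2) (e8 : y1 ≠ x2) (e9 : y1 ≠ y2)
    (f1 : m1 ≠ m3) (f2 : m1 ≠ x3) (f3 : m1 ≠ y3)
    (f4 : x1 ≠ m3) (f5 : x1 ≠ x3) (f6 : x1 ≠ y3)
    (f7 : y1 ≠ m3) (f8 : y1 ≠ x3) (f9 : y1 ≠ y3)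
    (k1 : m2 ≠ m3) (k2 : m2 ≠ x3) (k3 : m2 ≠ y3)
    (k4 : x2 ≠ m3) (k5 : x2 ≠ x3) (k6 : x2 ≠ y3)
    (k7 : y2 ≠ m3) (k8 : y2 ≠ x3) (k9 : y2 ≠ y3)
    (a1 : G.Adj m1 x1) (a2 : G.Adj m1 y1) (a3 : G.Adj x1 y1)
    (a4 : G.Adj m2 x2) (a5 : G.Adj m2 y2) (a6 : G.Adj x2 y2)
    (a7 : G.Adj m3 x3) (a8 : G.Adj m3 y3) (a9 : G.Adj x3 y3)
    (c1 : G.Adj m1 m2) (c2 : G.Adj m1 m3) (c3 : G.Adj m2 m3)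
    (c4 : G.Adj x1 x2) (c5 : G.Adj x1 x3) (c6 : G.Adj x2 x3)
    (c7 : G.Adj y1 y2) (c8 : G.Adj y1 y3) (c9 : G.Adj y2 y3)
    (n1 : ¬G.Adj m1 x2) (n2 : ¬G.Adj m1 y2) (n3 : ¬G.Adj m1 x3) (n4 : ¬G.Adj m1 y3)
    (n5 : ¬G.Adj x1 m2) (n6 : ¬G.Adj x1 y2) (n7 : ¬G.Adj x1 m3) (n8 : ¬G.Adj x1 y3)
    (n9 : ¬G.Adj y1 m2) (n10 : ¬G.Adj y1 x2) (n11 : ¬G.Adj y1 m3) (n12 : ¬G.Adj y1 x3)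
    (n13 : ¬G.Adj m2 x3) (n14 : ¬G.Adj m2 y3) (n15 : ¬G.Adj x2 m3) (n16 : ¬G.Adj x2 y3)
    (n17 : ¬G.Adj y2 m3) (n18 : ¬G.Adj y2 x3) :
    IsGrid G (fun i j =>
      if i = 0 then (if j = 0 then m1 else if j = 1 then x1 else y1)
      else if i = 1 then (if j = 0 then m2 else if j = 1 then x2 else y2)
      else (if j = 0 then m3 else if j = 1 then x3 else y3)) := by
  have n1' : ¬G.Adj x2 m1 := fun h => n1 h.symm
  have n2' : ¬G.Adj y2 m1 := fun h => n2 h.symm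
  have n3' : ¬G.Adj x3 m1 := fun h => n3 h.symm
  have n4' : ¬G.Adj y3 m1 := fun h => n4 h.symm
  have n5' : ¬G.Adj m2 x1 := fun h => n5 h.symm
  have n6' : ¬G.Adj y2 x1 := fun h => n6 h.symm
  have n7' : ¬G.Adj m3 x1 := fun h => n7 h.symm
  have n8' : ¬G.Adj y3 x1 := fun h => n8 h.symm
  have n9' : ¬G.Adj m2 y1 := fun h => n9 h.symm
  have n10' : ¬G.Adj x2 y1 := fun h => n10 h.symm
  have n11' : ¬G.Adj m3 y1 := fun h => n11 h.symm
  have n12' : ¬G.Adj x3 y1 := fun h => n12 h.symm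
  have n13' : ¬G.Adj x3 m2 := fun h => n13 h.symm
  have n14' : ¬G.Adj y3 m2 := fun h => n14 h.symm
  have n15' : ¬G.Adj m3 x2 := fun h => n15 h.symm
  have n16' : ¬G.Adj y3 x2 := fun h => n16 h.symm
  have n17' : ¬G.Adj m3 y2 := fun h => n17 h.symm
  have n18' : ¬G.Adj x3 y2 := fun h => n18 h.symm
  have a1' := a1.symm; have a2' := a2.symm; have a3' := a3.symm
  have a4' := a4.symm; have a5' := a5.symm; have a6' := a6.symm
  have a7' := a7.symm; have a8' := a8.symm; have a9' := a9.symm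
  have c1' := c1.symm; have c2' := c2.symm; have c3' := c3.symm
  have c4' := c4.symm; have c5' := c5.symm; have c6' := c6.symm
  have c7' := c7.symm; have c8' := c8.symm; have c9' := c9.symm
  have d1s := Ne.symm d1
  have d2s := Ne.symm d2
  have d3s := Ne.symm d3
  have d4s := Ne.symm d4
  have d5s := Ne.symm d5
  have d6s := Ne.symm d6
  have d7s := Ne.symm d7
  have d8s := Ne.symm d8
  have d9s := Ne.symm d9
  have e1s := Ne.symm e1
  have e2s := Ne.symm e2
  have e3s := Ne.symm e3
  have e4s := Ne.symm e4
  have e5s := Ne.symm e5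
  have e6s := Ne.symm e6
  have e7s := Ne.symm e7
  have e8s := Ne.symm e8
  have e9s := Ne.symm e9
  have f1s := Ne.symm f1
  have f2s := Ne.symm f2
  have f3s := Ne.symm f3
  have f4s := Ne.symm f4
  have f5s := Ne.symm f5
  have f6s := Ne.symm f6
  have f7s := Ne.symm f7
  have f8s := Ne.symm f8
  have f9s := Ne.symm f9
  have k1s := Ne.symm k1
  have k2s := Ne.symm k2
  have k3s := Ne.symm k3
  have k4s := Ne.symm k4
  have k5s := Ne.symm k5
  have k6s := Ne.symm k6
  have k7s := Ne.symm k7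
  have k8s := Ne.symm k8
  have k9s := Ne.symm k9
  constructor
  · intro i j i' j' h
    fin_cases i <;> fin_cases i' <;> fin_cases j <;> fin_cases j' <;>
      simp only [Fin.isValue, Fin.zero_eta, Fin.mk_one, show ((⟨2,by omega⟩ : Fin 3) = 2) from rfl,
        if_true, reduceIte] at h ⊢ <;> simp_all
  · intro i j i' j'
    fin_cases i <;> fin_cases i' <;> fin_cases j <;> fin_cases j' <;>
      simp_all
end MkGrid

section ClawGrid
variable {V : Type*} [DecidableEq V] {G : SimpleGraph V}

lemma claw_grid (hG : Prismatic G) (hor : Orientable G)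
    {T S1 S2 S3 : Finset V} (hT : G.IsNClique 3 T) (hS1 : G.IsNClique 3 S1)
    (hS2 : G.IsNClique 3 S2) (hS3 : G.IsNClique 3 S3)
    (hm1 : (S1 ∩ T).Nonempty) (hm2 : (S2 ∩ T).Nonempty) (hm3 : (S3 ∩ T).Nonempty)
    (d12 : Disjoint S1 S2) (d13 : Disjoint S1 S3) (d23 : Disjoint S2 S3) :
    ∃ g, IsGrid G g ∧ gCol g 0 = T ∧ gRow g 0 = S1 ∧ gRow g 1 = S2 ∧ gRow g 2 = S3 := by
  classical
  have hdj : ∀ {a b : V} {P Q : Finset V}, Disjoint P Q → a ∈ P → b ∈ Q → a ≠ b :=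
    fun hd ha hb h => (Finset.disjoint_left.mp hd ha) (h ▸ hb)
  obtain ⟨m1, hm1'⟩ := hm1
  obtain ⟨m2, hm2'⟩ := hm2
  obtain ⟨m3, hm3'⟩ := hm3
  rw [Finset.mem_inter] at hm1' hm2' hm3'
  obtain ⟨hm1S, hm1T⟩ := hm1'
  obtain ⟨hm2S, hm2T⟩ := hm2'
  obtain ⟨hm3S, hm3T⟩ := hm3'
  have ne12 : m1 ≠ m2 := hdj d12 hm1S hm2S
  have ne13 : m1 ≠ m3 := hdj d13 hm1S hm3S
  have ne23 : m2 ≠ m3 := hdj d23 hm2S hm3S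
  have hTeq : T = {m1, m2, m3} := by
    refine (Finset.eq_of_subset_of_card_le ?_ ?_).symm
    · intro z hz
      simp only [Finset.mem_insert, Finset.mem_singleton] at hz
      rcases hz with rfl | rfl | rfl <;> assumption
    · rw [hT.2, Finset.card_eq_three.mpr ⟨m1, m2, m3, ne12, ne13, ne23, rfl⟩]
  have Am12 : G.Adj m1 m2 := hT.1 hm1T hm2T ne12
  have Am13 : G.Adj m1 m3 := hT.1 hm1T hm3T ne13
  have Am23 : G.Adj m2 m3 := hT.1 hm2T hm3T ne23
  obtain ⟨x1, y1, nm1x1, nm1y1, nx1y1, Am1x1, Am1y1, Ax1y1, hS1eq⟩ := tri_with hS1 hm1S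
  have hx1S1 : x1 ∈ S1 := by rw [hS1eq]; simp
  have hy1S1 : y1 ∈ S1 := by rw [hS1eq]; simp
  have d_x1_m2 : x1 ≠ m2 := hdj d12 hx1S1 hm2S
  have d_x1_m3 : x1 ≠ m3 := hdj d13 hx1S1 hm3S
  have d_y1_m2 : y1 ≠ m2 := hdj d12 hy1S1 hm2S
  have d_y1_m3 : y1 ≠ m3 := hdj d13 hy1S1 hm3S
  have nAx1m2 : ¬ G.Adj x1 m2 :=
    uniq hG Am12 Am13 Am23 nm1x1.symm d_x1_m2 d_x1_m3 Am1x1.symm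
  have nAx1m3 : ¬ G.Adj x1 m3 :=
    uniq hG Am13 Am12 Am23.symm nm1x1.symm d_x1_m3 d_x1_m2 Am1x1.symm
  have nAy1m2 : ¬ G.Adj y1 m2 :=
    uniq hG Am12 Am13 Am23 nm1y1.symm d_y1_m2 d_y1_m3 Am1y1.symm
  have nAy1m3 : ¬ G.Adj y1 m3 :=
    uniq hG Am13 Am12 Am23.symm nm1y1.symm d_y1_m3 d_y1_m2 Am1y1.symm
  -- relabel S2 so that x1 is adjacent to x2
  obtain ⟨x2, y2, nm2x2, nm2y2, nx2y2, Am2x2, Am2y2, Ax2y2, hS2eq, Ax1x2⟩ :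
      ∃ x y, m2 ≠ x ∧ m2 ≠ y ∧ x ≠ y ∧ G.Adj m2 x ∧ G.Adj m2 y ∧ G.Adj x y ∧
        S2 = {m2, x, y} ∧ G.Adj x1 x := by
    obtain ⟨x, y, h1, h2, h3, h4, h5, h6, h7⟩ := tri_with hS2 hm2S
    have hxS2 : x ∈ S2 := by rw [h7]; simp
    have hyS2 : y ∈ S2 := by rw [h7]; simp
    have hone := exi hG h4 h5 h6 d_x1_m2 (hdj d12 hx1S1 hxS2) (hdj d12 hx1S1 hyS2)
    rcases hone with h | h | h
    · exact absurd h nAx1m2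
    · exact ⟨x, y, h1, h2, h3, h4, h5, h6, h7, h⟩
    · exact ⟨y, x, h2, h1, h3.symm, h5, h4, h6.symm, by rw [h7]; ext z; simp; tauto, h⟩
  have hx2S2 : x2 ∈ S2 := by rw [hS2eq]; simp
  have hy2S2 : y2 ∈ S2 := by rw [hS2eq]; simp
  have d_m1_x2 : m1 ≠ x2 := hdj d12 hm1S hx2S2
  have d_m1_y2 : m1 ≠ y2 := hdj d12 hm1S hy2S2
  have d_x1_x2 : x1 ≠ x2 := hdj d12 hx1S1 hx2S2
  have d_x1_y2 : x1 ≠ y2 := hdj d12 hx1S1 hy2S2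
  have d_y1_x2 : y1 ≠ x2 := hdj d12 hy1S1 hx2S2
  have d_y1_y2 : y1 ≠ y2 := hdj d12 hy1S1 hy2S2
  have d_x2_m3 : x2 ≠ m3 := hdj d23 hx2S2 hm3S
  have d_y2_m3 : y2 ≠ m3 := hdj d23 hy2S2 hm3S
  have Ay1y2 : G.Adj y1 y2 := by
    have hone := exi hG Am2x2 Am2y2 Ax2y2 d_y1_m2 d_y1_x2 d_y1_y2
    rcases hone with h | h | h
    · exact absurd h nAy1m2
    · exfalso
      exact uniq hG Ax1y1 Am1x1.symm Am1y1.symm d_x1_x2.symm d_y1_x2.symm d_m1_x2.symm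
        Ax1x2.symm h.symm
    · exact h
  -- relabel S3 so that x1 is adjacent to x3
  obtain ⟨x3, y3, nm3x3, nm3y3, nx3y3, Am3x3, Am3y3, Ax3y3, hS3eq, Ax1x3⟩ :
      ∃ x y, m3 ≠ x ∧ m3 ≠ y ∧ x ≠ y ∧ G.Adj m3 x ∧ G.Adj m3 y ∧ G.Adj x y ∧
        S3 = {m3, x, y} ∧ G.Adj x1 x := by
    obtain ⟨x, y, h1, h2, h3, h4, h5, h6, h7⟩ := tri_with hS3 hm3S
    have hxS3 : x ∈ S3 := by rw [h7]; simp
    have hyS3 : y ∈ S3 := by rw [h7]; simp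
    have hone := exi hG h4 h5 h6 d_x1_m3 (hdj d13 hx1S1 hxS3) (hdj d13 hx1S1 hyS3)
    rcases hone with h | h | h
    · exact absurd h nAx1m3
    · exact ⟨x, y, h1, h2, h3, h4, h5, h6, h7, h⟩
    · exact ⟨y, x, h2, h1, h3.symm, h5, h4, h6.symm, by rw [h7]; ext z; simp; tauto, h⟩
  have hx3S3 : x3 ∈ S3 := by rw [hS3eq]; simp
  have hy3S3 : y3 ∈ S3 := by rw [hS3eq]; simp
  have d_m1_x3 : m1 ≠ x3 := hdj d13 hm1S hx3S3
  have d_m1_y3 : m1 ≠ y3 := hdj d13 hm1S hy3S3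
  have d_x1_x3 : x1 ≠ x3 := hdj d13 hx1S1 hx3S3
  have d_x1_y3 : x1 ≠ y3 := hdj d13 hx1S1 hy3S3
  have d_y1_x3 : y1 ≠ x3 := hdj d13 hy1S1 hx3S3
  have d_y1_y3 : y1 ≠ y3 := hdj d13 hy1S1 hy3S3
  have d_m2_x3 : m2 ≠ x3 := hdj d23 hm2S hx3S3
  have d_m2_y3 : m2 ≠ y3 := hdj d23 hm2S hy3S3
  have d_x2_x3 : x2 ≠ x3 := hdj d23 hx2S2 hx3S3
  have d_x2_y3 : x2 ≠ y3 := hdj d23 hx2S2 hy3S3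
  have d_y2_x3 : y2 ≠ x3 := hdj d23 hy2S2 hx3S3
  have d_y2_y3 : y2 ≠ y3 := hdj d23 hy2S2 hy3S3
  have Ay1y3 : G.Adj y1 y3 := by
    have hone := exi hG Am3x3 Am3y3 Ax3y3 d_y1_m3 d_y1_x3 d_y1_y3
    rcases hone with h | h | h
    · exact absurd h nAy1m3
    · exfalso
      exact uniq hG Ax1y1 Am1x1.symm Am1y1.symm d_x1_x3.symm d_y1_x3.symm d_m1_x3.symm
        Ax1x3.symm h.symm
    · exact h
  have nAx2m1 : ¬ G.Adj x2 m1 :=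
    uniq hG Am12.symm Am23 Am13 nm2x2.symm d_m1_x2.symm d_x2_m3 Am2x2.symm
  have nAx2m3 : ¬ G.Adj x2 m3 :=
    uniq hG Am23 Am12.symm Am13.symm nm2x2.symm d_x2_m3 d_m1_x2.symm Am2x2.symm
  have nAy2m1 : ¬ G.Adj y2 m1 :=
    uniq hG Am12.symm Am23 Am13 nm2y2.symm d_m1_y2.symm d_y2_m3 Am2y2.symm
  have nAy2m3 : ¬ G.Adj y2 m3 :=
    uniq hG Am23 Am12.symm Am13.symm nm2y2.symm d_y2_m3 d_m1_y2.symm Am2y2.symm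
  have nAx3m1 : ¬ G.Adj x3 m1 :=
    uniq hG Am13.symm Am23.symm Am12 nm3x3.symm d_m1_x3.symm d_m2_x3.symm Am3x3.symm
  have nAx3m2 : ¬ G.Adj x3 m2 :=
    uniq hG Am23.symm Am13.symm Am12.symm nm3x3.symm d_m2_x3.symm d_m1_x3.symm Am3x3.symm
  have nAy3m1 : ¬ G.Adj y3 m1 :=
    uniq hG Am13.symm Am23.symm Am12 nm3y3.symm d_m1_y3.symm d_m2_y3.symm Am3y3.symm
  have nAy3m2 : ¬ G.Adj y3 m2 :=
    uniq hG Am23.symm Am13.symm Am12.symm nm3y3.symm d_m2_y3.symm d_m1_y3.symm Am3y3.symm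
  have d12' : Disjoint ({m1, x1, y1} : Finset V) ({m2, x2, y2} : Finset V) := by
    rw [← hS1eq, ← hS2eq]; exact d12
  have d13' : Disjoint ({m1, x1, y1} : Finset V) ({m3, x3, y3} : Finset V) := by
    rw [← hS1eq, ← hS3eq]; exact d13
  have d23' : Disjoint ({m2, x2, y2} : Finset V) ({m3, x3, y3} : Finset V) := by
    rw [← hS2eq, ← hS3eq]; exact d23
  have Ax2x3 : G.Adj x2 x3 := by
    have hone := exi hG Am3x3 Am3y3 Ax3y3 d_x2_m3 d_x2_x3 d_x2_y3
    rcases hone with h | h | h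
    · exact absurd h nAx2m3
    · exact h
    · exfalso
      have h2 : G.Adj y2 x3 := by
        have h3 := exi hG Am3x3 Am3y3 Ax3y3 d_y2_m3 d_y2_x3 d_y2_y3
        rcases h3 with h3 | h3 | h3
        · exact absurd h3 nAy2m3
        · exact h3
        · exact absurd h3.symm
            (uniq hG Ax2y2 Am2x2.symm Am2y2.symm d_x2_y3.symm d_y2_y3.symm d_m2_y3.symm h.symm)
      exact parity hor Am1x1 Am1y1 Ax1y1 Am2x2 Am2y2 Ax2y2 Am3x3 Am3y3 Ax3y3 d12' d13' d23'
        Am12 Ax1x2 Ay1y2 Am13 Ax1x3 Ay1y3 Am23 h h2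
  have Ay2y3 : G.Adj y2 y3 := by
    have hone := exi hG Am3x3 Am3y3 Ax3y3 d_y2_m3 d_y2_x3 d_y2_y3
    rcases hone with h | h | h
    · exact absurd h nAy2m3
    · exact absurd h.symm
        (uniq hG Ax2y2 Am2x2.symm Am2y2.symm d_x2_x3.symm d_y2_x3.symm d_m2_x3.symm Ax2x3.symm)
    · exact h
  have nAx1y2 : ¬ G.Adj x1 y2 :=
    uniq hG Ax2y2 Am2x2.symm Am2y2.symm d_x1_x2 d_x1_y2 d_x1_m2 Ax1x2
  have nAx1y3 : ¬ G.Adj x1 y3 :=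
    uniq hG Ax3y3 Am3x3.symm Am3y3.symm d_x1_x3 d_x1_y3 d_x1_m3 Ax1x3
  have nAy1x2 : ¬ G.Adj y1 x2 :=
    uniq hG Ax2y2.symm Am2y2.symm Am2x2.symm d_y1_y2 d_y1_x2 d_y1_m2 Ay1y2
  have nAy1x3 : ¬ G.Adj y1 x3 :=
    uniq hG Ax3y3.symm Am3y3.symm Am3x3.symm d_y1_y3 d_y1_x3 d_y1_m3 Ay1y3
  have nAx2y3 : ¬ G.Adj x2 y3 :=
    uniq hG Ax3y3 Am3x3.symm Am3y3.symm d_x2_x3 d_x2_y3 d_x2_m3 Ax2x3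
  have nAy2x3 : ¬ G.Adj y2 x3 :=
    uniq hG Ax3y3.symm Am3y3.symm Am3x3.symm d_y2_y3 d_y2_x3 d_y2_m3 Ay2y3
  have nAm1x2 : ¬ G.Adj m1 x2 := fun h => nAx2m1 h.symm
  have nAm1y2 : ¬ G.Adj m1 y2 := fun h => nAy2m1 h.symm
  have nAm1x3 : ¬ G.Adj m1 x3 := fun h => nAx3m1 h.symm
  have nAm1y3 : ¬ G.Adj m1 y3 := fun h => nAy3m1 h.symm
  have nAm2x3 : ¬ G.Adj m2 x3 := fun h => nAx3m2 h.symm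
  have nAm2y3 : ¬ G.Adj m2 y3 := fun h => nAy3m2 h.symm
  refine ⟨_, mk_grid nm1x1 nm1y1 nx1y1 nm2x2 nm2y2 nx2y2 nm3x3 nm3y3 nx3y3
    ne12 d_m1_x2 d_m1_y2 d_x1_m2 d_x1_x2 d_x1_y2 d_y1_m2 d_y1_x2 d_y1_y2
    ne13 d_m1_x3 d_m1_y3 d_x1_m3 d_x1_x3 d_x1_y3 d_y1_m3 d_y1_x3 d_y1_y3
    ne23 d_m2_x3 d_m2_y3 d_x2_m3 d_x2_x3 d_x2_y3 d_y2_m3 d_y2_x3 d_y2_y3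
    Am1x1 Am1y1 Ax1y1 Am2x2 Am2y2 Ax2y2 Am3x3 Am3y3 Ax3y3
    Am12 Am13 Am23 Ax1x2 Ax1x3 Ax2x3 Ay1y2 Ay1y3 Ay2y3
    nAm1x2 nAm1y2 nAm1x3 nAm1y3 nAx1m2 nAx1y2 nAx1m3 nAx1y3
    nAy1m2 nAy1x2 nAy1m3 nAy1x3 nAm2x3 nAm2y3 nAx2m3 nAx2y3 nAy2m3 nAy2x3, ?_, ?_, ?_, ?_⟩
  · show ({m1, m2, m3} : Finset V) = T
    exact hTeq.symm
  · show ({m1, x1, y1} : Finset V) = S1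
    exact hS1eq.symm
  · show ({m2, x2, y2} : Finset V) = S2
    exact hS2eq.symm
  · show ({m3, x3, y3} : Finset V) = S3
    exact hS3eq.symm
end ClawGrid

/-- For an orientable prismatic graph G, every connected component of the derived graph
D(G) is claw-free or isomorphic to K_{3,3}. -/
theorem derived_graph_components_clawfree_or_K33 {V : Type*} [Fintype V] [DecidableEq V]
    (G : SimpleGraph V) (hG : Prismatic G) (hor : Orientable G) :
    ∀ C : (DerivedGraph G).ConnectedComponent,
      (¬ Nonempty (Claw ↪g ((DerivedGraph G).induce C.supp))) ∨
      Nonempty (((DerivedGraph G).induce C.supp) ≃g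
        completeBipartiteGraph (Fin 3) (Fin 3)) := by
  intro C
  by_cases hclaw : Nonempty (Claw ↪g ((DerivedGraph G).induce C.supp))
  swap
  · exact Or.inl hclaw
  right
  obtain ⟨e⟩ := hclaw
  have cl : ∀ v : Fin 4, v ≠ 0 → Claw.Adj 0 v := fun v hv => Or.inl ⟨rfl, hv⟩
  have ncl : ∀ u v : Fin 4, u ≠ 0 → v ≠ 0 → ¬ Claw.Adj u v := by
    rintro u v hu hv (⟨h1, -⟩ | ⟨h1, -⟩)
    exacts [hu h1, hv h1]
  have hmapadj : ∀ u v : Fin 4, Claw.Adj u v → (DerivedGraph G).Adj (e u).1 (e v).1 :=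
    fun u v h => e.map_rel_iff.mpr h
  have hmapnadj : ∀ u v : Fin 4, ¬ Claw.Adj u v → ¬ (DerivedGraph G).Adj (e u).1 (e v).1 :=
    fun u v h hh => h (e.map_rel_iff.mp hh)
  have hd : ∀ u v : Fin 4, u ≠ 0 → v ≠ 0 → u ≠ v → Disjoint (e u).1.1 (e v).1.1 := by
    intro u v hu hv huv
    have hne : (e u).1 ≠ (e v).1 := fun h => huv (e.injective (Subtype.ext h))
    by_contra hdis
    exact hmapnadj u v (ncl u v hu hv) ⟨hne, Finset.not_disjoint_iff_nonempty_inter.mp hdis⟩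
  have hmeet : ∀ v : Fin 4, v ≠ 0 → ((e v).1.1 ∩ (e 0).1.1).Nonempty := by
    intro v hv
    have := (hmapadj 0 v (cl v hv)).2
    rwa [Finset.inter_comm] at this
  obtain ⟨g, hg, hcol0, hrow0, hrow1, hrow2⟩ :=
    claw_grid hG hor (e 0).1.2 (e 1).1.2 (e 2).1.2 (e 3).1.2
      (hmeet 1 (by decide)) (hmeet 2 (by decide)) (hmeet 3 (by decide))
      (hd 1 2 (by decide) (by decide) (by decide))
      (hd 1 3 (by decide) (by decide) (by decide))
      (hd 2 3 (by decide) (by decide) (by decide))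
  let Rt : Fin 3 → {T : Finset V // G.IsNClique 3 T} := fun i => ⟨gRow g i, gRow_clique hg i⟩
  let Ct : Fin 3 → {T : Finset V // G.IsNClique 3 T} := fun j => ⟨gCol g j, gCol_clique hg j⟩
  let inSIX : {T : Finset V // G.IsNClique 3 T} → Prop :=
    fun U => (∃ i, U.1 = gRow g i) ∨ (∃ j, U.1 = gCol g j)
  have key : ∀ U U' : {T : Finset V // G.IsNClique 3 T}, (DerivedGraph G).Adj U U' → inSIX U → inSIX U' := by
    rintro U U' ⟨hne', hint⟩ hU
    obtain ⟨z, hz⟩ := hint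
    rw [Finset.mem_inter] at hz
    rcases hU with ⟨i, hUi⟩ | ⟨j, hUj⟩
    · have hzr : z ∈ gRow g i := hUi ▸ hz.1
      obtain ⟨j, rfl⟩ := mem_gRow.mp hzr
      exact (grid_closure hG hor hg U'.2 hz.2).elim (fun h => Or.inl ⟨i, h⟩)
        (fun h => Or.inr ⟨j, h⟩)
    · have hzc : z ∈ gCol g j := hUj ▸ hz.1
      obtain ⟨i, rfl⟩ := mem_gCol.mp hzc
      exact (grid_closure hG hor hg U'.2 hz.2).elim (fun h => Or.inl ⟨i, h⟩)
        (fun h => Or.inr ⟨j, h⟩)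
  have reach : ∀ U U' : {T : Finset V // G.IsNClique 3 T}, (DerivedGraph G).Reachable U U' → inSIX U → inSIX U' := by
    intro U U' h
    obtain ⟨w⟩ := h
    induction w with
    | nil => exact fun h => h
    | cons h p ih => exact fun hU => ih (key _ _ h hU)
  have hTC : (DerivedGraph G).connectedComponentMk (e 0).1 = C :=
    (SimpleGraph.ConnectedComponent.mem_supp_iff C (e 0).1).mp (e 0).2
  have hTin : inSIX (e 0).1 := Or.inr ⟨0, hcol0.symm⟩
  have hsub : ∀ U : {T : Finset V // G.IsNClique 3 T}, U ∈ C.supp → inSIX U := by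
    intro U hU
    have h1 : (DerivedGraph G).connectedComponentMk U = C :=
      (SimpleGraph.ConnectedComponent.mem_supp_iff C U).mp hU
    exact reach _ U (SimpleGraph.ConnectedComponent.exact (hTC.trans h1.symm)) hTin
  have hRCne : ∀ i j : Fin 3, gRow g i ≠ gCol g j := by
    intro i j h
    obtain ⟨j', hj'⟩ : ∃ j' : Fin 3, j' ≠ j := by
      by_cases hj : j = 0
      · exact ⟨1, by rw [hj]; decide⟩
      · exact ⟨0, fun hh => hj hh.symm⟩
    have hmem : g i j' ∈ gCol g j := h ▸ (mem_gRow.mpr ⟨j', rfl⟩)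
    obtain ⟨k, hk⟩ := mem_gCol.mp hmem
    exact hj' (hg.1 _ _ _ _ hk).2
  have hRRne : ∀ i i' : Fin 3, i ≠ i' → Rt i ≠ Rt i' := by
    intro i i' hii h
    have h1 : gRow g i = gRow g i' := congrArg Subtype.val h
    have hmem : g i 0 ∈ gRow g i' := h1 ▸ (mem_gRow.mpr ⟨0, rfl⟩)
    obtain ⟨k, hk⟩ := mem_gRow.mp hmem
    exact hii (hg.1 _ _ _ _ hk).1
  have hCCne : ∀ j j' : Fin 3, j ≠ j' → Ct j ≠ Ct j' := by
    intro j j' hjj h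
    have h1 : gCol g j = gCol g j' := congrArg Subtype.val h
    have hmem : g 0 j ∈ gCol g j' := h1 ▸ (mem_gCol.mpr ⟨0, rfl⟩)
    obtain ⟨k, hk⟩ := mem_gCol.mp hmem
    exact hjj (hg.1 _ _ _ _ hk).2
  have adjRC : ∀ i j : Fin 3, (DerivedGraph G).Adj (Rt i) (Ct j) := by
    intro i j
    refine ⟨fun h => hRCne i j (congrArg Subtype.val h), ⟨g i j, ?_⟩⟩
    rw [Finset.mem_inter]
    exact ⟨mem_gRow.mpr ⟨j, rfl⟩, mem_gCol.mpr ⟨i, rfl⟩⟩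
  have nadjRR : ∀ i i' : Fin 3, ¬ (DerivedGraph G).Adj (Rt i) (Rt i') := by
    rintro i i' ⟨hne', hz⟩
    obtain ⟨z, hz⟩ := hz
    rw [Finset.mem_inter] at hz
    obtain ⟨j, rfl⟩ := mem_gRow.mp hz.1
    obtain ⟨j', hj'⟩ := mem_gRow.mp hz.2
    exact hne' (congrArg Rt (hg.1 _ _ _ _ hj').1)
  have nadjCC : ∀ j j' : Fin 3, ¬ (DerivedGraph G).Adj (Ct j) (Ct j') := by
    rintro j j' ⟨hne', hz⟩
    obtain ⟨z, hz⟩ := hz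
    rw [Finset.mem_inter] at hz
    obtain ⟨i, rfl⟩ := mem_gCol.mp hz.1
    obtain ⟨i', hi'⟩ := mem_gCol.mp hz.2
    exact hne' (congrArg Ct (hg.1 _ _ _ _ hi').2)
  have hT' : Ct 0 = (e 0).1 := Subtype.ext hcol0
  have memsupp : ∀ U : {T : Finset V // G.IsNClique 3 T}, (DerivedGraph G).Reachable U (e 0).1 → U ∈ C.supp := fun U h =>
    (SimpleGraph.ConnectedComponent.mem_supp_iff C U).mpr
      ((SimpleGraph.ConnectedComponent.sound h).trans hTC)
  have hRtmem : ∀ i, Rt i ∈ C.supp := by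
    intro i
    apply memsupp
    rw [← hT']
    exact (adjRC i 0).reachable
  have hCtmem : ∀ j, Ct j ∈ C.supp := by
    intro j
    apply memsupp
    rw [← hT']
    exact ((adjRC 0 j).symm.reachable).trans (adjRC 0 0).reachable
  let f : Fin 3 ⊕ Fin 3 → ↥C.supp :=
    Sum.elim (fun i => ⟨Rt i, hRtmem i⟩) (fun j => ⟨Ct j, hCtmem j⟩)
  have hinj : Function.Injective f := by
    rintro (i | i) (j | j) h <;>
      have h1 : _ = _ := congrArg Subtype.val h
    · by_cases hij : i = j
      · exact congrArg Sum.inl hij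
      · exact absurd h1 (hRRne i j hij)
    · exact absurd (congrArg Subtype.val h1) (hRCne i j)
    · exact absurd (congrArg Subtype.val h1).symm (hRCne j i)
    · by_cases hij : i = j
      · exact congrArg Sum.inr hij
      · exact absurd h1 (hCCne i j hij)
  have hsurj : Function.Surjective f := by
    rintro ⟨U, hU⟩
    rcases hsub U hU with ⟨i, h⟩ | ⟨j, h⟩
    · exact ⟨Sum.inl i, Subtype.ext (Subtype.ext h.symm)⟩
    · exact ⟨Sum.inr j, Subtype.ext (Subtype.ext h.symm)⟩
  refine ⟨(RelIso.symm (⟨Equiv.ofBijective f ⟨hinj, hsurj⟩, ?_⟩ :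
    completeBipartiteGraph (Fin 3) (Fin 3) ≃g (DerivedGraph G).induce C.supp))⟩
  have conv : ∀ (u v : ↥C.supp), (SimpleGraph.induce C.supp (DerivedGraph G)).Adj u v ↔
      (DerivedGraph G).Adj u.1 v.1 := fun u v => Iff.rfl
  intro a b
  match a, b with
  | Sum.inl i, Sum.inl j =>
    constructor
    · intro h
      exact absurd ((conv _ _).mp h) (nadjRR i j)
    · rintro (⟨-, h⟩ | ⟨h, -⟩) <;> simp at h
  | Sum.inl i, Sum.inr j =>
    constructor
    · intro _
      exact Or.inl ⟨rfl, rfl⟩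
    · intro _
      exact (conv _ _).mpr (adjRC i j)
  | Sum.inr i, Sum.inl j =>
    constructor
    · intro _
      exact Or.inr ⟨rfl, rfl⟩
    · intro _
      exact (conv _ _).mpr ((adjRC j i).symm)
  | Sum.inr i, Sum.inr j =>
    constructor
    · intro h
      exact absurd ((conv _ _).mp h) (nadjCC i j)
    · rintro (⟨h, -⟩ | ⟨-, h⟩) <;> simp at h
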